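/- For every matrix f ∈ Mat_p(ℂ⟨X₁,…,X_q⟩) of noncommutative polynomials there exist an integer N > 0 and matrices b ∈ Mat_{p×N}(ℂ), c ∈ Mat_{N×p}(ℂ), and d ∈ GL_N(ℂ⟨X₁,…,X_q⟩) with every entry of d in the ℂ-linear span of 1, X₁,…,X_q, such that f = b d⁻¹ c. -/

import Mathlib

open Matrix

noncomputable section

variable {q : ℕ}

local notation "R" q => FreeAlgebra ℂ (Fin q)

abbrev A (q : ℕ) : ℂ →+* FreeAlgebra ℂ (Fin q) := (algebraMap ℂ (FreeAlgebra ℂ (Fin q)))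

/-- the span of 1 and generators -/
def LSpan (q : ℕ) : Submodule ℂ (FreeAlgebra ℂ (Fin q)) :=
  Submodule.span ℂ (insert (1 : FreeAlgebra ℂ (Fin q)) (Set.range (FreeAlgebra.ι ℂ)))

lemma one_mem_LSpan : (1 : FreeAlgebra ℂ (Fin q)) ∈ LSpan q :=
  Submodule.subset_span (Set.mem_insert _ _)

lemma ι_mem_LSpan (k : Fin q) : FreeAlgebra.ι ℂ k ∈ LSpan q :=
  Submodule.subset_span (Set.mem_insert_iff.2 (Or.inr ⟨k, rfl⟩))

lemma algebraMap_mem_LSpan (r : ℂ) : algebraMap ℂ (FreeAlgebra ℂ (Fin q)) r ∈ LSpan q := by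
  rw [Algebra.algebraMap_eq_smul_one]
  exact (LSpan q).smul_mem r one_mem_LSpan

/-- Elementwise linearization predicate, with explicit two-sided inverse. -/
def GoodElem (q : ℕ) (a : FreeAlgebra ℂ (Fin q)) : Prop :=
  ∃ (N : ℕ), 0 < N ∧ ∃ (b : Matrix (Fin 1) (Fin N) ℂ) (c : Matrix (Fin N) (Fin 1) ℂ)
    (d e : Matrix (Fin N) (Fin N) (FreeAlgebra ℂ (Fin q))),
    d * e = 1 ∧ e * d = 1 ∧
    (∀ i j, d i j ∈ LSpan q) ∧
    (b.map (A q) * e * c.map (A q)) 0 0 = a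

lemma entry_one_one {S : Type*} [NonAssocSemiring S] (M N : Matrix (Fin 1) (Fin 1) S) :
    (M * N) 0 0 = M 0 0 * N 0 0 := by
  simp [Matrix.mul_apply]

lemma goodElem_algebraMap (r : ℂ) : GoodElem q (algebraMap ℂ _ r) := by
  refine ⟨1, one_pos, Matrix.of fun _ _ => r, 1, 1, 1, one_mul 1, one_mul 1,
    fun i j => ?_, ?_⟩
  · fin_cases i; fin_cases j; exact one_mem_LSpan
  · simp [entry_one_one, Matrix.map_apply]

lemma goodElem_ι (k : Fin q) : GoodElem q (FreeAlgebra.ι ℂ k) := by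
  refine ⟨2, two_pos, !![1, 0], !![0; 1],
    !![1, -FreeAlgebra.ι ℂ k; 0, 1], !![1, FreeAlgebra.ι ℂ k; 0, 1], ?_, ?_, ?_, ?_⟩
  · rw [Matrix.mul_fin_two, Matrix.one_fin_two]; norm_num
  · rw [Matrix.mul_fin_two, Matrix.one_fin_two]; norm_num
  · intro i j
    fin_cases i <;> fin_cases j <;>
      simp [one_mem_LSpan, ι_mem_LSpan, neg_mem, Submodule.zero_mem]
  · simp [Matrix.mul_apply, Fin.sum_univ_two, Matrix.map_apply]

end
noncomputable section
open Matrix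
variable {q : ℕ}

lemma map_submatrix' {l m n o : Type*} (M : Matrix m n ℂ) (f : l → m) (g : o → n) :
    (M.submatrix f g).map (A q) = (M.map (A q)).submatrix f g := rfl

/-- transfer from an arbitrary nonempty fintype index to `Fin N` -/
lemma goodElem_of_index {n : Type} [Fintype n] [DecidableEq n] [Nonempty n]
    {a : FreeAlgebra ℂ (Fin q)}
    (b : Matrix (Fin 1) n ℂ) (c : Matrix n (Fin 1) ℂ)
    (d e : Matrix n n (FreeAlgebra ℂ (Fin q)))
    (hde : d * e = 1) (hed : e * d = 1)
    (hspan : ∀ i j, d i j ∈ LSpan q)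
    (heq : (b.map (A q) * e * c.map (A q)) 0 0 = a) :
    GoodElem q a := by
  classical
  obtain ⟨N, ⟨eqv⟩⟩ : ∃ N, Nonempty (n ≃ Fin N) := ⟨Fintype.card n, ⟨Fintype.equivFin n⟩⟩
  refine ⟨N, Fin.pos_iff_nonempty.2 ⟨eqv (Classical.arbitrary n)⟩,
    b.submatrix id eqv.symm, c.submatrix eqv.symm id,
    d.submatrix eqv.symm eqv.symm, e.submatrix eqv.symm eqv.symm, ?_, ?_, ?_, ?_⟩
  · rw [Matrix.submatrix_mul_equiv, hde, Matrix.submatrix_one_equiv]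
  · rw [Matrix.submatrix_mul_equiv, hed, Matrix.submatrix_one_equiv]
  · intro i j; exact hspan _ _
  · rw [map_submatrix', map_submatrix']
    rw [show (b.map (A q)).submatrix id ⇑eqv.symm = (b.map (A q)).submatrix id ⇑eqv.symm from rfl]
    rw [Matrix.submatrix_mul_equiv (e₂ := eqv.symm)]
    rw [Matrix.submatrix_mul_equiv (e₂ := eqv.symm)]
    simpa using heq

lemma map_fromColumns {m n₁ n₂ : Type*} (B₁ : Matrix m n₁ ℂ) (B₂ : Matrix m n₂ ℂ) :
    (fromCols B₁ B₂).map (A q) = fromCols (B₁.map (A q)) (B₂.map (A q)) := by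
  ext i (j | j) <;> rfl

lemma map_fromRows {m n₁ n₂ : Type*} (B₁ : Matrix n₁ m ℂ) (B₂ : Matrix n₂ m ℂ) :
    (fromRows B₁ B₂).map (A q) = fromRows (B₁.map (A q)) (B₂.map (A q)) := by
  ext (i | i) j <;> rfl

lemma goodElem_add {a₁ a₂ : FreeAlgebra ℂ (Fin q)} (h₁ : GoodElem q a₁) (h₂ : GoodElem q a₂) :
    GoodElem q (a₁ + a₂) := by
  obtain ⟨N₁, hN₁, b₁, c₁, d₁, e₁, hde₁, hed₁, hs₁, he₁⟩ := h₁
  obtain ⟨N₂, hN₂, b₂, c₂, d₂, e₂, hde₂, hed₂, hs₂, he₂⟩ := h₂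
  have : Nonempty (Fin N₁) := Fin.pos_iff_nonempty.1 hN₁
  refine goodElem_of_index (n := Fin N₁ ⊕ Fin N₂)
    (fromCols b₁ b₂) (fromRows c₁ c₂)
    (fromBlocks d₁ 0 0 d₂) (fromBlocks e₁ 0 0 e₂) ?_ ?_ ?_ ?_
  · rw [Matrix.fromBlocks_multiply]; simp [hde₁, hde₂, Matrix.fromBlocks_one]
  · rw [Matrix.fromBlocks_multiply]; simp [hed₁, hed₂, Matrix.fromBlocks_one]
  · rintro (i | i) (j | j) <;>
      simp [Matrix.fromBlocks_apply₁₁, Matrix.fromBlocks_apply₁₂,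
        Matrix.fromBlocks_apply₂₁, Matrix.fromBlocks_apply₂₂, hs₁, hs₂, Submodule.zero_mem]
  · rw [map_fromColumns, map_fromRows, fromCols_mul_fromBlocks, fromCols_mul_fromRows]
    simp only [Matrix.mul_zero, Matrix.zero_mul, add_zero, zero_add]
    rw [← he₁, ← he₂]
    simp [Matrix.add_apply]

lemma goodElem_mul {a₁ a₂ : FreeAlgebra ℂ (Fin q)} (h₁ : GoodElem q a₁) (h₂ : GoodElem q a₂) :
    GoodElem q (a₁ * a₂) := by
  obtain ⟨N₁, hN₁, b₁, c₁, d₁, e₁, hde₁, hed₁, hs₁, he₁⟩ := h₁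
  obtain ⟨N₂, hN₂, b₂, c₂, d₂, e₂, hde₂, hed₂, hs₂, he₂⟩ := h₂
  have : Nonempty (Fin N₁) := Fin.pos_iff_nonempty.1 hN₁
  set K : Matrix (Fin N₁) (Fin N₂) (FreeAlgebra ℂ (Fin q)) := (c₁ * b₂).map (A q) with hK
  refine goodElem_of_index (n := Fin N₁ ⊕ Fin N₂)
    (fromCols b₁ 0) (fromRows 0 c₂)
    (fromBlocks d₁ (-K) 0 d₂) (fromBlocks e₁ (e₁ * K * e₂) 0 e₂) ?_ ?_ ?_ ?_
  · rw [Matrix.fromBlocks_multiply]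
    have : d₁ * (e₁ * K * e₂) + -(K * e₂) = 0 := by
      rw [← Matrix.mul_assoc, ← Matrix.mul_assoc, hde₁, Matrix.one_mul]
      exact add_neg_cancel _
    simp [hde₁, hde₂, this, Matrix.fromBlocks_one]
  · rw [Matrix.fromBlocks_multiply]
    have : -(e₁ * K) + e₁ * K * e₂ * d₂ = 0 := by
      rw [Matrix.mul_assoc (e₁ * K), hed₂, Matrix.mul_one]
      exact neg_add_cancel _
    simp [hed₁, hed₂, this, Matrix.fromBlocks_one]
  · rintro (i | i) (j | j) <;>
      simp only [Matrix.fromBlocks_apply₁₁, Matrix.fromBlocks_apply₁₂,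
        Matrix.fromBlocks_apply₂₁, Matrix.fromBlocks_apply₂₂, Matrix.zero_apply]
    · exact hs₁ _ _
    · rw [hK, Matrix.neg_apply, Matrix.map_apply]
      exact neg_mem (algebraMap_mem_LSpan _)
    · exact Submodule.zero_mem _
    · exact hs₂ _ _
  · rw [map_fromColumns, map_fromRows, fromCols_mul_fromBlocks, fromCols_mul_fromRows]
    simp only [Matrix.map_zero _ (map_zero (A q)), Matrix.zero_mul, Matrix.mul_zero,
      add_zero, zero_add]
    have : b₁.map (A q) * (e₁ * K * e₂) * c₂.map (A q)
        = (b₁.map (A q) * e₁ * c₁.map (A q)) * (b₂.map (A q) * e₂ * c₂.map (A q)) := by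
      rw [hK, Matrix.map_mul]
      noncomm_ring [Matrix.mul_assoc]
    rw [this, entry_one_one, he₁, he₂]

lemma goodElem (a : FreeAlgebra ℂ (Fin q)) : GoodElem q a := by
  induction a using FreeAlgebra.induction with
  | grade0 r => exact goodElem_algebraMap r
  | grade1 k => exact goodElem_ι k
  | mul x y hx hy => exact goodElem_mul hx hy
  | add x y hx hy => exact goodElem_add hx hy

end
noncomputable section
open Matrix
variable {q p : ℕ}

def GoodMat (p q : ℕ) (f : Matrix (Fin p) (Fin p) (FreeAlgebra ℂ (Fin q))) : Prop :=
  ∃ (N : ℕ), 0 < N ∧ ∃ (b : Matrix (Fin p) (Fin N) ℂ) (c : Matrix (Fin N) (Fin p) ℂ)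
    (d e : Matrix (Fin N) (Fin N) (FreeAlgebra ℂ (Fin q))),
    d * e = 1 ∧ e * d = 1 ∧
    (∀ i j, d i j ∈ LSpan q) ∧
    f = b.map (A q) * e * c.map (A q)

lemma goodMat_of_index {n : Type} [Fintype n] [DecidableEq n] [Nonempty n]
    {f : Matrix (Fin p) (Fin p) (FreeAlgebra ℂ (Fin q))}
    (b : Matrix (Fin p) n ℂ) (c : Matrix n (Fin p) ℂ)
    (d e : Matrix n n (FreeAlgebra ℂ (Fin q)))
    (hde : d * e = 1) (hed : e * d = 1)
    (hspan : ∀ i j, d i j ∈ LSpan q)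
    (heq : f = b.map (A q) * e * c.map (A q)) :
    GoodMat p q f := by
  classical
  obtain ⟨N, ⟨eqv⟩⟩ : ∃ N, Nonempty (n ≃ Fin N) := ⟨Fintype.card n, ⟨Fintype.equivFin n⟩⟩
  refine ⟨N, Fin.pos_iff_nonempty.2 ⟨eqv (Classical.arbitrary n)⟩,
    b.submatrix id eqv.symm, c.submatrix eqv.symm id,
    d.submatrix eqv.symm eqv.symm, e.submatrix eqv.symm eqv.symm, ?_, ?_, ?_, ?_⟩
  · rw [Matrix.submatrix_mul_equiv, hde, Matrix.submatrix_one_equiv]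
  · rw [Matrix.submatrix_mul_equiv, hed, Matrix.submatrix_one_equiv]
  · intro i j; exact hspan _ _
  · rw [map_submatrix', map_submatrix', Matrix.submatrix_mul_equiv (e₂ := eqv.symm),
      Matrix.submatrix_mul_equiv (e₂ := eqv.symm), Matrix.submatrix_id_id, heq]

lemma goodMat_zero : GoodMat p q 0 := by
  refine ⟨1, one_pos, 0, 0, 1, 1, one_mul 1, one_mul 1, fun i j => ?_, ?_⟩
  · fin_cases i; fin_cases j; exact one_mem_LSpan
  · rw [Matrix.map_zero _ (map_zero (A q)), Matrix.map_zero _ (map_zero (A q)),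
      Matrix.zero_mul, Matrix.zero_mul]

lemma goodMat_add {f₁ f₂ : Matrix (Fin p) (Fin p) (FreeAlgebra ℂ (Fin q))}
    (h₁ : GoodMat p q f₁) (h₂ : GoodMat p q f₂) : GoodMat p q (f₁ + f₂) := by
  obtain ⟨N₁, hN₁, b₁, c₁, d₁, e₁, hde₁, hed₁, hs₁, he₁⟩ := h₁
  obtain ⟨N₂, hN₂, b₂, c₂, d₂, e₂, hde₂, hed₂, hs₂, he₂⟩ := h₂
  have : Nonempty (Fin N₁) := Fin.pos_iff_nonempty.1 hN₁
  refine goodMat_of_index (n := Fin N₁ ⊕ Fin N₂)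
    (fromCols b₁ b₂) (fromRows c₁ c₂)
    (fromBlocks d₁ 0 0 d₂) (fromBlocks e₁ 0 0 e₂) ?_ ?_ ?_ ?_
  · rw [Matrix.fromBlocks_multiply]; simp [hde₁, hde₂, Matrix.fromBlocks_one]
  · rw [Matrix.fromBlocks_multiply]; simp [hed₁, hed₂, Matrix.fromBlocks_one]
  · rintro (i | i) (j | j) <;>
      simp [Matrix.fromBlocks_apply₁₁, Matrix.fromBlocks_apply₁₂,
        Matrix.fromBlocks_apply₂₁, Matrix.fromBlocks_apply₂₂, hs₁, hs₂, Submodule.zero_mem]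
  · rw [map_fromColumns, map_fromRows, fromCols_mul_fromBlocks, fromCols_mul_fromRows]
    simp only [Matrix.mul_zero, Matrix.zero_mul, add_zero, zero_add]
    rw [he₁, he₂]

lemma map_stdBasisMatrix' (i : Fin p) (j : Fin 1) :
    (single i j (1:ℂ)).map (A q) = single i j 1 := by
  ext a b
  simp [Matrix.single, Matrix.map_apply, apply_ite (A q)]

lemma map_stdBasisMatrix'' (i : Fin 1) (j : Fin p) :
    (single i j (1:ℂ)).map (A q) = single i j 1 := by
  ext a b
  simp [Matrix.single, Matrix.map_apply, apply_ite (A q)]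

lemma sandwich {S : Type*} [Semiring S] (i j : Fin p) (M : Matrix (Fin 1) (Fin 1) S) :
    single i (0 : Fin 1) (1 : S) * M * single (0 : Fin 1) j (1 : S)
      = single i j (M 0 0) := by
  ext a b
  simp only [Matrix.mul_apply, Matrix.single, Matrix.of_apply, Fin.sum_univ_one,
    Fin.isValue, boole_mul, mul_boole, ite_mul, zero_mul, one_mul]
  by_cases h1 : i = a <;> by_cases h2 : j = b <;> simp [h1, h2]

lemma goodMat_stdBasis (i j : Fin p) (a : FreeAlgebra ℂ (Fin q)) :
    GoodMat p q (single i j a) := by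
  obtain ⟨N, hN, b, c, d, e, hde, hed, hs, he⟩ := goodElem a
  refine ⟨N, hN, single i (0 : Fin 1) (1:ℂ) * b, c * single (0 : Fin 1) j (1:ℂ),
    d, e, hde, hed, hs, ?_⟩
  rw [Matrix.map_mul, Matrix.map_mul, map_stdBasisMatrix', map_stdBasisMatrix'']
  have h2 : single i (0 : Fin 1) (1 : FreeAlgebra ℂ (Fin q)) *
      (b.map (A q) * e * c.map (A q)) * single (0 : Fin 1) j (1 : FreeAlgebra ℂ (Fin q))
        = single i j a := by
    rw [sandwich, he]
  rw [← h2]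
  simp only [Matrix.mul_assoc]

lemma goodMat (f : Matrix (Fin p) (Fin p) (FreeAlgebra ℂ (Fin q))) : GoodMat p q f := by
  rcases Nat.eq_zero_or_pos p with hp | hp
  · subst hp
    have : f = 0 := by ext i; exact absurd i.2 (by simp)
    rw [this]; exact goodMat_zero
  · have : Nonempty (Fin p) := Fin.pos_iff_nonempty.1 hp
    induction f using Matrix.induction_on' with
    | h_zero => exact goodMat_zero
    | h_add f g hf hg => exact goodMat_add hf hg
    | h_std_basis i j x => exact goodMat_stdBasis i j x

set_option maxHeartbeats 1000000 in
theorem linearization_exists' (p q : ℕ)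
    (f : Matrix (Fin p) (Fin p) (FreeAlgebra ℂ (Fin q))) :
    ∃ (N : ℕ), 0 < N ∧
      ∃ (b : Matrix (Fin p) (Fin N) ℂ) (c : Matrix (Fin N) (Fin p) ℂ)
        (d : Matrix (Fin N) (Fin N) (FreeAlgebra ℂ (Fin q))),
        IsUnit d ∧
        (∀ i j, d i j ∈ Submodule.span ℂ
          (insert (1 : FreeAlgebra ℂ (Fin q)) (Set.range (FreeAlgebra.ι ℂ)))) ∧
        f = (b.map (algebraMap ℂ (FreeAlgebra ℂ (Fin q)))) * Ring.inverse d *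
              (c.map (algebraMap ℂ (FreeAlgebra ℂ (Fin q)))) := by
  obtain ⟨N, hN, b, c, d, e, hde, hed, hs, he⟩ := goodMat f
  let u : (Matrix (Fin N) (Fin N) (FreeAlgebra ℂ (Fin q)))ˣ := ⟨d, e, hde, hed⟩
  have hinv : Ring.inverse d = e := Ring.inverse_unit u
  exact ⟨N, hN, b, c, d, ⟨u, rfl⟩, hs, by rw [hinv]; exact he⟩

end

/-- linearization / Schützenberger fragment: every matrix of
noncommutative polynomials `f ∈ Mat_p(ℂ⟨X₁,…,X_q⟩)` factors as `b d⁻¹ c` with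
`b, c` scalar matrices and `d` an invertible matrix whose entries lie in the
linear span of `1, X₁, …, X_q`. -/
theorem linearization_exists (p q : ℕ)
    (f : Matrix (Fin p) (Fin p) (FreeAlgebra ℂ (Fin q))) :
    ∃ (N : ℕ), 0 < N ∧
      ∃ (b : Matrix (Fin p) (Fin N) ℂ) (c : Matrix (Fin N) (Fin p) ℂ)
        (d : Matrix (Fin N) (Fin N) (FreeAlgebra ℂ (Fin q))),
        IsUnit d ∧
        (∀ i j, d i j ∈ Submodule.span ℂ
          (insert (1 : FreeAlgebra ℂ (Fin q)) (Set.range (FreeAlgebra.ι ℂ)))) ∧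
        f = (b.map (algebraMap ℂ (FreeAlgebra ℂ (Fin q)))) * Ring.inverse d *
              (c.map (algebraMap ℂ (FreeAlgebra ℂ (Fin q)))) := by
  exact linearization_exists' p q f
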